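/- Let p = 2^m − δ be a prime and μ, k positive integers with μ < m and δ < 2^μ − 1. Let α ∈ Z_{2^μ}, and let P(x), P′(x) be distinct polynomials in F_p[x] with P(0) = P′(0) = 0. If τ is chosen uniformly at random from the set of k-bit strings (viewed as the subset {0,...,2^k−1} of F_p, assuming 2^k ≤ p), then the probability that ((P(τ) mod p) mod 2^μ) − ((P′(τ) mod p) mod 2^μ) ≡ α (mod 2^μ) is at most 2^{m−k−μ+1} · deg(P(x) − P′(x)). -/

import Mathlib

open Polynomial Finset

private lemma val_sub_cases' {p : ℕ} [NeZero p] (a b : ZMod p) :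
    (a - b).val + b.val = a.val ∨ (a - b).val + b.val = a.val + p := by
  have h := ZMod.val_add (a - b) b
  rw [sub_add_cancel] at h
  have h1 : (a - b).val < p := ZMod.val_lt _
  have h2 : b.val < p := ZMod.val_lt _
  rcases Nat.lt_or_ge ((a - b).val + b.val) p with hlt | hge
  · left; rw [Nat.mod_eq_of_lt hlt] at h; omega
  · right
    have h3 : ((a - b).val + b.val) % p = (a - b).val + b.val - p := by
      rw [Nat.mod_eq_sub_mod hge, Nat.mod_eq_of_lt (by omega)]
    omega

private lemma card_residue_le (p m μ : ℕ) [NeZero p] (hle : p ≤ 2 ^ m) (hμm : μ ≤ m)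
    (c : ZMod (2 ^ μ)) :
    (Finset.univ.filter fun z : ZMod p => ((z.val : ZMod (2 ^ μ)) = c)).card
      ≤ 2 ^ (m - μ) := by
  classical
  have h2μ : (0:ℕ) < 2 ^ μ := pow_pos two_pos μ
  have key : ∀ z : ZMod p, ((z.val : ZMod (2 ^ μ)) = c) → z.val % 2 ^ μ = c.val := by
    intro z hz
    have := congrArg ZMod.val hz
    rwa [ZMod.val_natCast] at this
  have := Finset.card_le_card_of_injOn (fun z : ZMod p => z.val / 2 ^ μ)
    (s := Finset.univ.filter fun z : ZMod p => ((z.val : ZMod (2 ^ μ)) = c))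
    (t := Finset.range (2 ^ (m - μ)))
    (fun z hz => by
      simp only [Finset.mem_coe, Finset.mem_range]
      have hlt : z.val < 2 ^ m := lt_of_lt_of_le (ZMod.val_lt z) hle
      have : (2:ℕ) ^ m = 2 ^ (m - μ) * 2 ^ μ := by rw [← pow_add]; congr 1; omega
      rw [Nat.div_lt_iff_lt_mul h2μ]; omega)
    (fun z hz w hw hzw => by
      simp only [Finset.mem_coe, Finset.mem_filter] at hz hw
      have hz' := key z hz.2
      have hw' := key w hw.2
      have hz'' := Nat.div_add_mod z.val (2 ^ μ)
      have hw'' := Nat.div_add_mod w.val (2 ^ μ)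
      have hzw2 : z.val / 2 ^ μ = w.val / 2 ^ μ := by simpa using hzw
      have : z.val = w.val := by
        conv_lhs => rw [← Nat.div_add_mod z.val (2 ^ μ)]
        conv_rhs => rw [← Nat.div_add_mod w.val (2 ^ μ)]
        rw [hz', hw', hzw2]
      exact ZMod.val_injective p this)
  simpa using this

private lemma card_eval_eq_le {p : ℕ} [Fact p.Prime] (Q : Polynomial (ZMod p))
    (hQ : 0 < Q.natDegree) (N : ℕ) (hN : N ≤ p) (z : ZMod p) :
    ((Finset.range N).filter fun t : ℕ => Q.eval (t : ZMod p) = z).card ≤ Q.natDegree := by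
  classical
  set R := Q - Polynomial.C z with hR
  have hRne : R ≠ 0 := by
    intro h
    have : Q = Polynomial.C z := by rwa [sub_eq_zero] at h
    rw [this] at hQ
    simp at hQ
  have hRdeg : R.natDegree = Q.natDegree := Polynomial.natDegree_sub_C
  have hsub := Finset.card_le_card_of_injOn (fun t : ℕ => (t : ZMod p))
    (s := (Finset.range N).filter fun t : ℕ => Q.eval (t : ZMod p) = z)
    (t := R.roots.toFinset)
    (fun t ht => by
      simp only [Finset.mem_coe, Finset.mem_filter, Finset.mem_range] at ht
      rw [Finset.mem_coe, Multiset.mem_toFinset, Polynomial.mem_roots hRne]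
      simp only [hR, Polynomial.IsRoot.def, Polynomial.eval_sub, Polynomial.eval_C, ht.2, sub_self])
    (fun t ht s hs hts => by
      simp only [Finset.mem_coe, Finset.mem_filter, Finset.mem_range] at ht hs
      have := congrArg ZMod.val hts
      rwa [ZMod.val_natCast_of_lt (lt_of_lt_of_le ht.1 hN),
        ZMod.val_natCast_of_lt (lt_of_lt_of_le hs.1 hN)] at this)
  calc ((Finset.range N).filter fun t : ℕ => Q.eval (t : ZMod p) = z).card
      ≤ R.roots.toFinset.card := hsub
    _ ≤ Multiset.card R.roots := R.roots.toFinset_card_le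
    _ ≤ R.natDegree := Polynomial.card_roots' R
    _ = Q.natDegree := hRdeg

theorem prob_differential_bound (m δ μ k p : ℕ) [NeZero p] (hp : p.Prime)
    (hpm : p = 2 ^ m - δ) (hμ0 : 0 < μ) (hμm : μ < m) (hδ : δ < 2 ^ μ - 1)
    (hk : 0 < k) (hkp : 2 ^ k ≤ p)
    (α : ZMod (2 ^ μ)) (P P' : Polynomial (ZMod p)) (hPP' : P ≠ P')
    (hP0 : P.coeff 0 = 0) (hP'0 : P'.coeff 0 = 0) :
    (((Finset.range (2 ^ k)).filter fun t : ℕ =>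
        (((P.eval (t : ZMod p)).val : ZMod (2 ^ μ)) -
          ((P'.eval (t : ZMod p)).val : ZMod (2 ^ μ)) = α)).card : ℝ) / (2 ^ k : ℝ)
      ≤ (2 : ℝ) ^ ((m : ℤ) - k - μ + 1) * ((P - P').natDegree : ℝ) := by
  classical
  haveI : Fact p.Prime := ⟨hp⟩
  set Q : Polynomial (ZMod p) := P - P' with hQdef
  have hQne : Q ≠ 0 := sub_ne_zero.mpr hPP'
  have hd : 0 < Q.natDegree := by
    rcases Nat.eq_zero_or_pos Q.natDegree with h0 | h
    · exfalso
      have hc : Q = Polynomial.C (Q.coeff 0) := Polynomial.eq_C_of_natDegree_eq_zero h0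
      have hc0 : Q.coeff 0 = 0 := by simp [hQdef, hP0, hP'0]
      rw [hc0] at hc
      simp at hc
      exact hQne hc
    · exact h
  have hp2 : 2 ≤ p := hp.two_le
  have hple : p ≤ 2 ^ m := by omega
  have hpδ : p + δ = 2 ^ m := by
    have : δ < 2 ^ m := by omega
    omega
  have hpcast : (p : ZMod (2 ^ μ)) = -(δ : ZMod (2 ^ μ)) := by
    have hmm : (2:ℕ) ^ m = 2 ^ μ * 2 ^ (m - μ) := by rw [← pow_add]; congr 1; omega
    have h2m : ((2:ZMod (2 ^ μ))) ^ m = 0 := by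
      calc (2:ZMod (2 ^ μ)) ^ m = ((2 ^ m : ℕ) : ZMod (2 ^ μ)) := by push_cast; ring
        _ = 0 := by rw [hmm, Nat.cast_mul, ZMod.natCast_self, zero_mul]
    have := congrArg (fun n : ℕ => (n : ZMod (2 ^ μ))) hpδ
    push_cast at this
    rw [h2m] at this
    linear_combination this
  -- the bad set of values
  set S : Finset (ZMod p) := Finset.univ.filter
    (fun z : ZMod p => (z.val : ZMod (2 ^ μ)) = α ∨ (z.val : ZMod (2 ^ μ)) = α - δ) with hS
  have hsubset : ((Finset.range (2 ^ k)).filter fun t : ℕ =>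
        (((P.eval (t : ZMod p)).val : ZMod (2 ^ μ)) -
          ((P'.eval (t : ZMod p)).val : ZMod (2 ^ μ)) = α))
      ⊆ S.biUnion (fun z => (Finset.range (2 ^ k)).filter
          (fun t : ℕ => Q.eval (t : ZMod p) = z)) := by
    intro t ht
    simp only [Finset.mem_filter, Finset.mem_range] at ht
    obtain ⟨htk, hteq⟩ := ht
    rw [Finset.mem_biUnion]
    refine ⟨Q.eval (t : ZMod p), ?_, by simp [htk]⟩
    rw [hS, Finset.mem_filter]
    refine ⟨Finset.mem_univ _, ?_⟩
    set a := P.eval (t : ZMod p)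
    set b := P'.eval (t : ZMod p)
    have heval : Q.eval (t : ZMod p) = a - b := by simp [hQdef]; rfl
    rcases val_sub_cases' a b with hcase | hcase
    · left
      have := congrArg (fun n : ℕ => (n : ZMod (2 ^ μ))) hcase
      push_cast at this
      rw [heval]
      linear_combination this + hteq
    · right
      have := congrArg (fun n : ℕ => (n : ZMod (2 ^ μ))) hcase
      push_cast at this
      rw [heval]
      rw [hpcast] at this
      linear_combination this + hteq
  have hScard : S.card ≤ 2 * 2 ^ (m - μ) := by
    have : S ⊆ (Finset.univ.filter fun z : ZMod p => (z.val : ZMod (2 ^ μ)) = α) ∪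
        (Finset.univ.filter fun z : ZMod p => (z.val : ZMod (2 ^ μ)) = α - δ) := by
      rw [hS, ← Finset.filter_or]
    calc S.card ≤ _ := Finset.card_le_card this
      _ ≤ _ + _ := Finset.card_union_le _ _
      _ ≤ 2 ^ (m - μ) + 2 ^ (m - μ) := by
          gcongr
          · exact card_residue_le p m μ hple hμm.le α
          · exact card_residue_le p m μ hple hμm.le (α - δ)
      _ = 2 * 2 ^ (m - μ) := by ring
  have hcount : ((Finset.range (2 ^ k)).filter fun t : ℕ =>
        (((P.eval (t : ZMod p)).val : ZMod (2 ^ μ)) -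
          ((P'.eval (t : ZMod p)).val : ZMod (2 ^ μ)) = α)).card
      ≤ 2 ^ (m - μ + 1) * Q.natDegree := by
    calc _ ≤ (S.biUnion (fun z => (Finset.range (2 ^ k)).filter
          (fun t : ℕ => Q.eval (t : ZMod p) = z))).card := Finset.card_le_card hsubset
      _ ≤ ∑ z ∈ S, ((Finset.range (2 ^ k)).filter
          (fun t : ℕ => Q.eval (t : ZMod p) = z)).card := Finset.card_biUnion_le
      _ ≤ ∑ _z ∈ S, Q.natDegree := by
          refine Finset.sum_le_sum fun z _ => ?_
          exact card_eval_eq_le Q hd (2 ^ k) hkp z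
      _ = S.card * Q.natDegree := by rw [Finset.sum_const, smul_eq_mul]
      _ ≤ (2 * 2 ^ (m - μ)) * Q.natDegree := by gcongr
      _ = 2 ^ (m - μ + 1) * Q.natDegree := by ring
  rw [div_le_iff₀ (by positivity)]
  have hexp : (2 : ℝ) ^ ((m : ℤ) - k - μ + 1) * 2 ^ k = 2 ^ (m - μ + 1 : ℕ) := by
    rw [show ((2:ℝ) ^ k) = (2:ℝ) ^ (k : ℤ) from (zpow_natCast 2 k).symm,
      ← zpow_add₀ (two_ne_zero), show ((2:ℝ) ^ (m - μ + 1 : ℕ)) = (2:ℝ) ^ ((m - μ + 1 : ℕ) : ℤ)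
        from (zpow_natCast 2 _).symm]
    congr 1
    omega
  calc (((Finset.range (2 ^ k)).filter fun t : ℕ =>
        (((P.eval (t : ZMod p)).val : ZMod (2 ^ μ)) -
          ((P'.eval (t : ZMod p)).val : ZMod (2 ^ μ)) = α)).card : ℝ)
      ≤ ((2 ^ (m - μ + 1) * Q.natDegree : ℕ) : ℝ) := by exact_mod_cast hcount
    _ = (2 : ℝ) ^ ((m : ℤ) - k - μ + 1) * (Q.natDegree : ℝ) * 2 ^ k := by
        push_cast
        rw [← hexp]
        ring
    _ = _ := by rw [hQdef]
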